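/- Multiply robust zero of the drift term: if Δ = E[(μ_Y − μ̄)·(f̄'_{TXM}·f_{TXM})/(f̄_{TXM}·f̄_{TX}) + (μ̄ − μ_Y)·f'_{TXM}/f̄_{TX} + (ω_Y − ω̄)·f'_{TX}/f̄_{TX} + ω̄ − η] (in the notation where bars denote limit nuisances, primes denote evaluation at t', and η = E[ω_Y]), then Δ = 0 under any of the four configurations: (μ̄ = μ_Y and ω̄ = ω_Y), (μ̄ = μ_Y and f̄_{TX} = f_{TX}), (ω̄ = ω_Y and f̄_{TXM} = f_{TXM}), or (f̄_{TX} = f_{TX} and f̄_{TXM} = f_{TXM}). -/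

import Mathlib

open MeasureTheory

lemma my_int_sub_self {Ω : Type*} [MeasurableSpace Ω] (μ : MeasureTheory.Measure Ω)
    [MeasureTheory.IsProbabilityMeasure μ] (f : Ω → ℝ) :
    ∫ ω, (f ω - ∫ ω', f ω' ∂μ) ∂μ = 0 := by
  by_cases hf : MeasureTheory.Integrable f μ
  · rw [MeasureTheory.integral_sub hf (MeasureTheory.integrable_const _),
      MeasureTheory.integral_const]
    simp
  · rw [MeasureTheory.integral_undef hf]
    simp only [sub_zero]
    exact MeasureTheory.integral_undef hf

/-- Multiply robust zero of the drift term: the expectation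
`Δ = E[(μ_Y − μ̄)·f̄_{T|X,M}(t'|X,M)·f_{T|X,M}(t|X,M)/(f̄_{T|X,M}(t|X,M)·f̄_{T|X}(t'|X))
  + (μ̄ − μ_Y)·f_{T|X,M}(t'|X,M)/f̄_{T|X}(t'|X)
  + (ω_Y − ω̄)·f_{T|X}(t'|X)/f̄_{T|X}(t'|X) + ω̄ − η]`
(with `η = E[ω_Y(X)]`) vanishes under any of the four correct-specification
configurations. -/
theorem stmt_15 {Ω : Type*} [MeasurableSpace Ω]
    {Mv Xv : Type*} [MeasurableSpace Mv] [MeasurableSpace Xv]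
    (μ : Measure Ω) [IsProbabilityMeasure μ]
    (Mrv : Ω → Mv) (Xrv : Ω → Xv)
    (hMmeas : Measurable Mrv) (hXmeas : Measurable Xrv)
    -- true nuisances (at the fixed treatment pair (t,t')) and their limits
    (muY muBar : Mv → Xv → ℝ) (omY omBar : Xv → ℝ)
    (fTXM fTXMbar : ℝ → Mv → Xv → ℝ) (fTX fTXbar : ℝ → Xv → ℝ)
    (t t' : ℝ)
    -- densities bounded below
    (c : ℝ) (hc : 0 < c)
    (hpos1 : ∀ s m x, c ≤ fTXM s m x) (hpos2 : ∀ s x, c ≤ fTX s x)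
    (hpos3 : ∀ s m x, c ≤ fTXMbar s m x) (hpos4 : ∀ s x, c ≤ fTXbar s x)
    -- boundedness of the nuisance functions
    (Cb : ℝ)
    (hbd1 : ∀ m x, |muY m x| ≤ Cb) (hbd2 : ∀ m x, |muBar m x| ≤ Cb)
    (hbd3 : ∀ x, |omY x| ≤ Cb) (hbd4 : ∀ x, |omBar x| ≤ Cb)
    (hbd5 : ∀ s m x, fTXM s m x ≤ Cb) (hbd6 : ∀ s x, fTX s x ≤ Cb)
    (hbd7 : ∀ s m x, fTXMbar s m x ≤ Cb) (hbd8 : ∀ s x, fTXbar s x ≤ Cb)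
    -- the mediated response is the expectation of the true cross conditional mean
    (η : ℝ) (hη : η = ∫ ω, omY (Xrv ω) ∂μ)
    (Δ : ℝ)
    (hΔ : Δ = ∫ ω,
        ((muY (Mrv ω) (Xrv ω) - muBar (Mrv ω) (Xrv ω))
            * (fTXMbar t' (Mrv ω) (Xrv ω) * fTXM t (Mrv ω) (Xrv ω))
            / (fTXMbar t (Mrv ω) (Xrv ω) * fTXbar t' (Xrv ω))
          + (muBar (Mrv ω) (Xrv ω) - muY (Mrv ω) (Xrv ω))
            * fTXM t' (Mrv ω) (Xrv ω) / fTXbar t' (Xrv ω)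
          + (omY (Xrv ω) - omBar (Xrv ω)) * fTX t' (Xrv ω) / fTXbar t' (Xrv ω)
          + omBar (Xrv ω) - η) ∂μ)
    (hcase : (muBar = muY ∧ omBar = omY) ∨
      (muBar = muY ∧ fTXbar = fTX) ∨
      (omBar = omY ∧ fTXMbar = fTXM) ∨
      (fTXbar = fTX ∧ fTXMbar = fTXM)) :
    Δ = 0 := by
  subst hη
  have key : ∀ g : Ω → ℝ,
      (∀ ω, ((muY (Mrv ω) (Xrv ω) - muBar (Mrv ω) (Xrv ω))
            * (fTXMbar t' (Mrv ω) (Xrv ω) * fTXM t (Mrv ω) (Xrv ω))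
            / (fTXMbar t (Mrv ω) (Xrv ω) * fTXbar t' (Xrv ω))
          + (muBar (Mrv ω) (Xrv ω) - muY (Mrv ω) (Xrv ω))
            * fTXM t' (Mrv ω) (Xrv ω) / fTXbar t' (Xrv ω)
          + (omY (Xrv ω) - omBar (Xrv ω)) * fTX t' (Xrv ω) / fTXbar t' (Xrv ω)
          + omBar (Xrv ω)) = omY (Xrv ω)) → Δ = 0 := by
    intro g h
    rw [hΔ]
    have : (fun ω => ((muY (Mrv ω) (Xrv ω) - muBar (Mrv ω) (Xrv ω))
            * (fTXMbar t' (Mrv ω) (Xrv ω) * fTXM t (Mrv ω) (Xrv ω))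
            / (fTXMbar t (Mrv ω) (Xrv ω) * fTXbar t' (Xrv ω))
          + (muBar (Mrv ω) (Xrv ω) - muY (Mrv ω) (Xrv ω))
            * fTXM t' (Mrv ω) (Xrv ω) / fTXbar t' (Xrv ω)
          + (omY (Xrv ω) - omBar (Xrv ω)) * fTX t' (Xrv ω) / fTXbar t' (Xrv ω)
          + omBar (Xrv ω) - ∫ ω, omY (Xrv ω) ∂μ))
        = fun ω => (omY (Xrv ω) - ∫ ω', omY (Xrv ω') ∂μ) := by
      funext ω
      rw [h ω]
    rw [this]
    exact my_int_sub_self μ (fun ω => omY (Xrv ω))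
  have hne1 : ∀ m x, fTXMbar t m x ≠ 0 := fun m x => ne_of_gt (lt_of_lt_of_le hc (hpos3 t m x))
  have hne2 : ∀ x, fTXbar t' x ≠ 0 := fun x => ne_of_gt (lt_of_lt_of_le hc (hpos4 t' x))
  have hne3 : ∀ x, fTX t' x ≠ 0 := fun x => ne_of_gt (lt_of_lt_of_le hc (hpos2 t' x))
  have hne4 : ∀ m x, fTXM t m x ≠ 0 := fun m x => ne_of_gt (lt_of_lt_of_le hc (hpos1 t m x))
  rcases hcase with ⟨h1, h2⟩ | ⟨h1, h2⟩ | ⟨h1, h2⟩ | ⟨h1, h2⟩ <;> subst h1 <;> subst h2 <;>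
    refine key (fun _ => 0) (fun ω => ?_)
  · simp
  · field_simp [hne2 (Xrv ω)]
    ring
  · field_simp [hne1 (Mrv ω) (Xrv ω), hne2 (Xrv ω)]
    ring
  · field_simp [hne4 (Mrv ω) (Xrv ω), hne3 (Xrv ω)]
    ring
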